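/- Hypocoercive Lyapunov dissipation: suppose κᵖ(t) ≡ 1 and κᶜ(t) ≡ κᶜ is constant, and u solves the relative guidance-by-repulsion equation on an interval I with u(t) ≠ 0 for all t ∈ I. Define L(t) := E(t) − (κᶜ/ν) (u(t)^⊥ · u'(t)). Then L is differentiable on I and satisfies L'(t) = −ν |u'(t) − (κᶜ/ν) u(t)^⊥|² ≤ 0 for all t ∈ I; in particular L is nonincreasing. -/

import Mathlib

open Real Filter MeasureTheory intervalIntegral
open scoped RealInnerProductSpace Topology

noncomputable section

/-- Perpendicular rotation in the plane: `(a, b)^⊥ = (-b, a)`. -/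
def perp (w : EuclideanSpace ℝ (Fin 2)) : EuclideanSpace ℝ (Fin 2) :=
  (WithLp.equiv 2 (Fin 2 → ℝ)).symm ![-(w 1), w 0]

/-- The relative guidance-by-repulsion equation
`u'' + (κᵖ(t) f_d(|u|) − f_e(|u|)) u + ν u' = κᶜ(t) u^⊥` holds at time `t`. -/
def SolvesRel (fd fe : ℝ → ℝ) (ν : ℝ) (κp κc : ℝ → ℝ)
    (u : ℝ → EuclideanSpace ℝ (Fin 2)) (t : ℝ) : Prop :=
  deriv (deriv u) t + (κp t * fd ‖u t‖ - fe ‖u t‖) • u t + ν • deriv u t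
    = κc t • perp (u t)

/-- The potential `P(w) = ∫_{r_p}^{‖w‖} r (f_d(r) − f_e(r)) dr`. -/
def pot (fd fe : ℝ → ℝ) (rp : ℝ) (w : EuclideanSpace ℝ (Fin 2)) : ℝ :=
  ∫ r in rp..‖w‖, r * (fd r - fe r)

lemma inner_perp_self (w : EuclideanSpace ℝ (Fin 2)) : ⟪perp w, w⟫ = (0:ℝ) := by
  simp [PiLp.inner_apply, Fin.sum_univ_two, perp]
  ring

lemma norm_perp (w : EuclideanSpace ℝ (Fin 2)) : ‖perp w‖ = ‖w‖ := by
  rw [← Real.sqrt_sq (norm_nonneg (perp w)), ← Real.sqrt_sq (norm_nonneg w),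
    ← real_inner_self_eq_norm_sq, ← real_inner_self_eq_norm_sq]
  congr 1
  rw [PiLp.inner_apply, PiLp.inner_apply]
  simp [Fin.sum_univ_two, perp]
  ring

def perpCLM : EuclideanSpace ℝ (Fin 2) →L[ℝ] EuclideanSpace ℝ (Fin 2) :=
  LinearMap.toContinuousLinearMap
    { toFun := perp
      map_add' := by
        intro x y
        refine PiLp.ext fun i => ?_
        fin_cases i <;> simp [perp] <;> ring_nf
      map_smul' := by
        intro c x
        refine PiLp.ext fun i => ?_
        fin_cases i <;> simp [perp] }

lemma perpCLM_apply (w : EuclideanSpace ℝ (Fin 2)) : perpCLM w = perp w := rfl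

/-- Hypocoercive Lyapunov dissipation: with `κᵖ ≡ 1` and constant `κᶜ`,
the function `L(t) = E(t) − (κᶜ/ν)(u^⊥·u')` satisfies
`L'(t) = −ν|u' − (κᶜ/ν) u^⊥|² ≤ 0`; in particular `L` is nonincreasing on `I`. -/
theorem hypocoercive_lyapunov_dissipation
    (fd fe : ℝ → ℝ) (rp γm : ℝ) (hrp : 0 < rp) (hγm : 0 < γm)
    (hfd_lip : LocallyLipschitzOn (Set.Ioi (0:ℝ)) fd)
    (hfe_lip : LocallyLipschitzOn (Set.Ioi (0:ℝ)) fe)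
    (hf_neg : ∀ r : ℝ, 0 < r → r < rp → fd r - fe r < 0)
    (hf_nonneg : ∀ r : ℝ, rp ≤ r → 0 ≤ fd r - fe r)
    (hf_deriv : 0 < deriv (fun r => fd r - fe r) rp)
    (hfd_nonneg : ∀ r : ℝ, 0 < r → 0 ≤ fd r)
    (hfd_bdd : ∃ C : ℝ, ∀ r : ℝ, 0 < r → fd r ≤ C)
    (hfd_lim : Filter.Tendsto fd Filter.atTop (nhds γm))
    (hfe_nonneg : ∀ r : ℝ, 0 < r → 0 ≤ fe r)
    (hfe_div : ¬ MeasureTheory.IntegrableOn (fun r => r * fe r) (Set.Ioc 0 rp))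
    (hfe_lim : Filter.Tendsto fe Filter.atTop (nhds 0))
    (ν : ℝ) (hν : 0 < ν) (κc : ℝ)
    (I : Set ℝ) (hI : I.OrdConnected)
    (u : ℝ → EuclideanSpace ℝ (Fin 2)) (hu : ContDiff ℝ 2 u)
    (hsol : ∀ t ∈ I, SolvesRel fd fe ν (fun _ => 1) (fun _ => κc) u t)
    (hne : ∀ t ∈ I, u t ≠ 0) :
    (∀ t ∈ I,
      HasDerivAt (fun s => ‖deriv u s‖ ^ 2 / 2 + pot fd fe rp (u s)
          - κc / ν * (inner ℝ (perp (u s)) (deriv u s) : ℝ))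
        (-ν * ‖deriv u t - (κc / ν) • perp (u t)‖ ^ 2) t ∧
      -ν * ‖deriv u t - (κc / ν) • perp (u t)‖ ^ 2 ≤ 0) ∧
    AntitoneOn (fun s => ‖deriv u s‖ ^ 2 / 2 + pot fd fe rp (u s)
        - κc / ν * (inner ℝ (perp (u s)) (deriv u s) : ℝ)) I := by
  have hu2 : ContDiff ℝ ((1:ℕ) + 1) u := by
    exact_mod_cast hu
  have hud : Differentiable ℝ u := (contDiff_succ_iff_deriv.mp hu2).1
  have hdud : Differentiable ℝ (deriv u) :=
    (contDiff_succ_iff_deriv.mp hu2).2.2.differentiable (by simp)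
  have key : ∀ t ∈ I,
      HasDerivAt (fun s => ‖deriv u s‖ ^ 2 / 2 + pot fd fe rp (u s)
          - κc / ν * (inner ℝ (perp (u s)) (deriv u s) : ℝ))
        (-ν * ‖deriv u t - (κc / ν) • perp (u t)‖ ^ 2) t := by
    intro t ht
    have hx0 : (0:ℝ) < ‖u t‖ := norm_pos_iff.mpr (hne t ht)
    have hu' : HasDerivAt u (deriv u t) t := (hud t).hasDerivAt
    have hv' : HasDerivAt (deriv u) (deriv (deriv u) t) t := (hdud t).hasDerivAt
    -- kinetic term
    have h1 : HasDerivAt (fun s => ‖deriv u s‖ ^ 2 / 2)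
        (⟪deriv u t, deriv (deriv u) t⟫) t := by
      have h := (hv'.inner ℝ hv').div_const 2
      have hfun : (fun s => (⟪deriv u s, deriv u s⟫:ℝ) / 2)
          = fun s => ‖deriv u s‖ ^ 2 / 2 := by
        funext s; rw [real_inner_self_eq_norm_sq]
      rw [hfun] at h
      refine h.congr_deriv ?_
      symm
      rw [real_inner_comm]; ring
    -- potential term
    have hcf : ContinuousOn (fun r => r * (fd r - fe r)) (Set.Ioi (0:ℝ)) :=
      continuousOn_id.mul ((hfd_lip.continuousOn).sub (hfe_lip.continuousOn))
    have hsub : Set.uIcc rp ‖u t‖ ⊆ Set.Ioi (0:ℝ) := by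
      intro r hr
      exact lt_of_lt_of_le (lt_min hrp hx0) hr.1
    have hint : IntervalIntegrable (fun r => r * (fd r - fe r)) volume rp ‖u t‖ :=
      (hcf.mono hsub).intervalIntegrable
    have hmeas := ContinuousOn.stronglyMeasurableAtFilter (μ := volume) isOpen_Ioi hcf ‖u t‖ hx0
    have hcontF : ContinuousAt (fun r => r * (fd r - fe r)) ‖u t‖ :=
      hcf.continuousAt (isOpen_Ioi.mem_nhds hx0)
    have hg : HasDerivAt (fun x => ∫ r in rp..x, r * (fd r - fe r))
        (‖u t‖ * (fd ‖u t‖ - fe ‖u t‖)) ‖u t‖ :=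
      intervalIntegral.integral_hasDerivAt_right hint hmeas hcontF
    have hinner : HasDerivAt (fun s => (⟪u s, u s⟫:ℝ))
        (⟪u t, deriv u t⟫ + ⟪deriv u t, u t⟫) t := hu'.inner ℝ hu'
    have hio : (⟪u t, u t⟫:ℝ) ≠ 0 := by
      rw [real_inner_self_eq_norm_sq]
      positivity
    have hnorm : HasDerivAt (fun s => ‖u s‖) (⟪u t, deriv u t⟫ / ‖u t‖) t := by
      have h := (Real.hasDerivAt_sqrt hio).comp t hinner
      have hfun : (Real.sqrt ∘ fun s => (⟪u s, u s⟫:ℝ)) = fun s => ‖u s‖ := by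
        funext s
        show √(⟪u s, u s⟫:ℝ) = ‖u s‖
        rw [real_inner_self_eq_norm_sq, Real.sqrt_sq (norm_nonneg _)]
      rw [hfun] at h
      refine h.congr_deriv ?_
      symm
      rw [real_inner_self_eq_norm_sq, Real.sqrt_sq (norm_nonneg _),
        real_inner_comm (deriv u t) (u t)]
      field_simp
      ring
    have h2 : HasDerivAt (fun s => pot fd fe rp (u s))
        ((fd ‖u t‖ - fe ‖u t‖) * ⟪u t, deriv u t⟫) t := by
      have h := hg.comp t hnorm
      have hfun : ((fun x => ∫ r in rp..x, r * (fd r - fe r)) ∘ fun s => ‖u s‖)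
          = fun s => pot fd fe rp (u s) := rfl
      rw [hfun] at h
      refine h.congr_deriv ?_
      symm
      field_simp
    -- coupling term
    have hperp : HasDerivAt (fun s => perp (u s)) (perp (deriv u t)) t := by
      have h := perpCLM.hasFDerivAt.comp_hasDerivAt t hu'
      exact h
    have h3 : HasDerivAt (fun s => κc / ν * (inner ℝ (perp (u s)) (deriv u s) : ℝ))
        (κc / ν * (⟪perp (u t), deriv (deriv u) t⟫ + ⟪perp (deriv u t), deriv u t⟫)) t :=
      (hperp.inner ℝ hv').const_mul (κc / ν)
    have hL := (h1.add h2).sub h3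
    refine hL.congr_deriv ?_
    symm
    -- now the algebraic identity, using the equation of motion
    have hW : deriv (deriv u) t
        = κc • perp (u t) - (fd ‖u t‖ - fe ‖u t‖) • u t - ν • deriv u t := by
      have h := hsol t ht
      simp only [SolvesRel, one_mul] at h
      rw [eq_sub_iff_add_eq, eq_sub_iff_add_eq]
      rw [← h]; abel
    rw [hW]
    simp only [inner_sub_right, real_inner_smul_right, inner_perp_self,
      real_inner_self_eq_norm_sq]
    rw [norm_sub_sq_real, norm_smul, Real.norm_eq_abs, mul_pow, sq_abs,
      real_inner_smul_right]
    simp only [norm_perp, real_inner_comm (perp (u t)) (deriv u t),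
      real_inner_comm (u t) (deriv u t)]
    field_simp
    ring
  have hnonpos : ∀ t : ℝ, -ν * ‖deriv u t - (κc / ν) • perp (u t)‖ ^ 2 ≤ 0 := by
    intro t
    have h1 : 0 ≤ ν * ‖deriv u t - (κc / ν) • perp (u t)‖ ^ 2 :=
      mul_nonneg hν.le (sq_nonneg _)
    linarith
  refine ⟨fun t ht => ⟨key t ht, hnonpos t⟩, ?_⟩
  refine antitoneOn_of_deriv_nonpos (convex_iff_ordConnected.mpr hI) ?_ ?_ ?_
  · intro t ht
    exact (key t ht).continuousAt.continuousWithinAt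
  · intro t ht
    exact ((key t (interior_subset ht)).differentiableAt).differentiableWithinAt
  · intro t ht
    rw [(key t (interior_subset ht)).deriv]
    exact hnonpos t
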